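/- Let α ∈ (1/2, 1), β ∈ (1/2, 1/2 + α), θ₁ > 0, and let δ*, η* ∈ ℝ satisfy δ* < 1 + 2α − 2β·1_{{α≠β}} and η* < 2β − 1 (where 1_{{α≠β}} equals 1 if α ≠ β and 0 if α = β). Then for every θ ≥ θ₁: ∫_0^1 |ξ_{α,β}(x;θ)|² x^{−δ*} dx + ∫_1^∞ |ξ_{α,β}(x;θ)|² x^{η*} dx ≤ ( (|sin(βπ)| θ₁^{−2} + |sin((α−β)π)| θ₁^{−1}) / (π sin²(απ)) )² / (1 + 2α − 2β·1_{{α≠β}} − δ*) + ( |sin(βπ)| / (π sin²(απ)) + |sin((α−β)π)| / (2π (1 + cos(απ))) )² / (2β − 1 − η*). -/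

import Mathlib

open MeasureTheory Real Set

/-- The density `ξ_{α,β}(x;θ)` of the Bernstein measure of the fractional resolvent:
`ξ_{α,β}(x;θ) = (1/π) (x^{2α−β} sin(βπ) − θ x^{α−β} sin((α−β)π))
                / (θ² + 2θ cos(απ) x^α + x^{2α})`. -/
noncomputable def xiFrac (α β x θ : ℝ) : ℝ :=
  (1 / Real.pi) *
    ((x ^ (2 * α - β) * Real.sin (β * Real.pi)
        - θ * x ^ (α - β) * Real.sin ((α - β) * Real.pi)) /
      (θ ^ 2 + 2 * θ * Real.cos (α * Real.pi) * x ^ α + x ^ (2 * α)))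

lemma sq_rpow_two (x α : ℝ) (hx : 0 < x) : x ^ (2*α) = (x ^ α) ^ 2 := by
  rw [show (2*α) = α*2 by ring, Real.rpow_mul hx.le, ← Real.rpow_natCast (x ^ α) 2]
  norm_num

lemma xi_abs_le (α β θ x : ℝ) (hα1 : 1/2 < α) (hα2 : α < 1) (hθ : 0 < θ) (hx : 0 < x) :
    |xiFrac α β x θ| ≤
      (x ^ (2*α-β) * |Real.sin (β * Real.pi)| + θ * x ^ (α-β) * |Real.sin ((α-β) * Real.pi)|) /
        (Real.pi * (θ ^ 2 + 2 * θ * Real.cos (α * Real.pi) * x ^ α + x ^ (2 * α))) := by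
  have hπ := Real.pi_pos
  have hs : 0 < Real.sin (α * Real.pi) := by
    apply Real.sin_pos_of_pos_of_lt_pi <;> nlinarith
  have hx2 := sq_rpow_two x α hx
  have hD : 0 < θ ^ 2 + 2 * θ * Real.cos (α * Real.pi) * x ^ α + x ^ (2 * α) := by
    rw [hx2]
    nlinarith [Real.sin_sq_add_cos_sq (α * Real.pi), sq_nonneg (θ * Real.cos (α*Real.pi) + x ^ α),
      mul_pos (mul_pos hθ hθ) (mul_pos hs hs)]
  rw [xiFrac, abs_mul, abs_of_pos (show (0:ℝ) < 1/Real.pi by positivity), abs_div,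
    abs_of_pos hD, div_mul_div_comm, one_mul]
  gcongr
  calc |x ^ (2*α-β) * Real.sin (β * Real.pi) - θ * x ^ (α-β) * Real.sin ((α-β) * Real.pi)|
      ≤ |x ^ (2*α-β) * Real.sin (β * Real.pi)| + |θ * x ^ (α-β) * Real.sin ((α-β) * Real.pi)| :=
        abs_sub _ _
    _ = x ^ (2*α-β) * |Real.sin (β * Real.pi)| + θ * x ^ (α-β) * |Real.sin ((α-β) * Real.pi)| := by
        rw [abs_mul, abs_mul, abs_mul, abs_of_pos hθ,
          abs_of_pos (Real.rpow_pos_of_pos hx _), abs_of_pos (Real.rpow_pos_of_pos hx _)]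

lemma xi_bound_small (α β θ₁ θ x : ℝ) (hα1 : 1/2 < α) (hα2 : α < 1)
    (hθ₁ : 0 < θ₁) (hθ : θ₁ ≤ θ) (hx : 0 < x) (hx1 : x ≤ 1) :
    |xiFrac α β x θ| ≤
      ((|Real.sin (β * Real.pi)| / θ₁ ^ 2 + |Real.sin ((α - β) * Real.pi)| / θ₁) /
          (Real.pi * Real.sin (α * Real.pi) ^ 2)) *
        x ^ (α - β * (if α = β then 0 else 1)) := by
  have hπ := Real.pi_pos
  have hθ0 : 0 < θ := lt_of_lt_of_le hθ₁ hθ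
  have hs : 0 < Real.sin (α * Real.pi) := by
    apply Real.sin_pos_of_pos_of_lt_pi <;> nlinarith
  have hx2 := sq_rpow_two x α hx
  set t1 := |Real.sin (β * Real.pi)| with ht1def
  set t2 := |Real.sin ((α - β) * Real.pi)| with ht2def
  set c := Real.cos (α * Real.pi) with hcdef
  set D := θ ^ 2 + 2 * θ * c * x ^ α + x ^ (2 * α) with hDdef
  have hpyth := Real.sin_sq_add_cos_sq (α * Real.pi)
  have hDge : θ ^ 2 * Real.sin (α * Real.pi) ^ 2 ≤ D := by
    rw [hDdef, hx2]; nlinarith [sq_nonneg (θ * c + x ^ α)]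
  have hD : 0 < D := lt_of_lt_of_le (by positivity) hDge
  have hE : 0 ≤ x ^ (α - β * (if α = β then 0 else 1)) := Real.rpow_nonneg hx.le _
  have hC₁ : 0 ≤ (t1 / θ₁ ^ 2 + t2 / θ₁) / (Real.pi * Real.sin (α * Real.pi) ^ 2) :=
    div_nonneg (add_nonneg (div_nonneg (abs_nonneg _) (sq_nonneg _))
      (div_nonneg (abs_nonneg _) hθ₁.le)) (by positivity)
  refine (xi_abs_le α β θ x hα1 hα2 hθ0 hx).trans ?_
  rw [div_le_iff₀ (by positivity : (0:ℝ) < Real.pi * D)]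
  refine le_trans ?_ (mul_le_mul_of_nonneg_left
    (mul_le_mul_of_nonneg_left hDge hπ.le) (mul_nonneg hC₁ hE))
  set E := α - β * (if α = β then 0 else 1) with hEdef
  have hch : (t1 / θ₁ ^ 2 + t2 / θ₁) / (Real.pi * Real.sin (α * Real.pi) ^ 2) * x ^ E *
      (Real.pi * (θ ^ 2 * Real.sin (α * Real.pi) ^ 2)) =
      x ^ E * (t1 / θ₁ ^ 2 * θ ^ 2) + x ^ E * (t2 / θ₁ * θ ^ 2) := by
    have hs' : Real.sin (Real.pi * α) ≠ 0 := by rw [mul_comm]; exact hs.ne'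
    field_simp
  rw [hch]
  apply add_le_add
  · have hEeq : x ^ (2*α-β) ≤ x ^ E := by
      rw [hEdef]
      by_cases hab : α = β
      · rw [if_pos hab]
        exact le_of_eq (by rw [show 2*α-β = α - β*0 by rw [hab]; ring])
      · rw [if_neg hab, show 2*α-β = (α - β*1) + α by ring, Real.rpow_add hx]
        exact mul_le_of_le_one_right (Real.rpow_nonneg hx.le _)
          (Real.rpow_le_one hx.le hx1 (by linarith))
    have ht1le : t1 ≤ t1 / θ₁ ^ 2 * θ ^ 2 := by
      rw [div_mul_eq_mul_div, le_div_iff₀ (by positivity)]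
      nlinarith [abs_nonneg (Real.sin (β * Real.pi)), mul_self_le_mul_self hθ₁.le hθ]
    calc x ^ (2*α-β) * t1 ≤ x ^ E * t1 :=
          mul_le_mul_of_nonneg_right hEeq (abs_nonneg _)
      _ ≤ x ^ E * (t1 / θ₁ ^ 2 * θ ^ 2) := mul_le_mul_of_nonneg_left ht1le hE
  · by_cases hab : α = β
    · have hsin : Real.sin ((α - β) * Real.pi) = 0 := by rw [hab]; simp
      simp [ht2def, hsin]
    · rw [hEdef, if_neg hab, mul_one]
      have hθle : θ ≤ θ ^ 2 / θ₁ := by rw [le_div_iff₀ hθ₁]; nlinarith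
      calc θ * x ^ (α - β) * t2 = x ^ (α - β) * t2 * θ := by ring
        _ ≤ x ^ (α - β) * t2 * (θ ^ 2 / θ₁) := by
            apply mul_le_mul_of_nonneg_left hθle
              (mul_nonneg (Real.rpow_nonneg hx.le _) (abs_nonneg _))
        _ = x ^ (α - β) * (t2 / θ₁ * θ ^ 2) := by ring

lemma xi_bound_large (α β θ x : ℝ) (hα1 : 1/2 < α) (hα2 : α < 1)
    (hθ : 0 < θ) (hx : 0 < x) :
    |xiFrac α β x θ| ≤
      (|Real.sin (β * Real.pi)| / (Real.pi * Real.sin (α * Real.pi) ^ 2)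
          + |Real.sin ((α - β) * Real.pi)| /
              (2 * Real.pi * (1 + Real.cos (α * Real.pi)))) * x ^ (-β) := by
  have hπ := Real.pi_pos
  have hs : 0 < Real.sin (α * Real.pi) := by
    apply Real.sin_pos_of_pos_of_lt_pi <;> nlinarith
  have hx2 := sq_rpow_two x α hx
  have hpyth := Real.sin_sq_add_cos_sq (α * Real.pi)
  set t1 := |Real.sin (β * Real.pi)| with ht1def
  set t2 := |Real.sin ((α - β) * Real.pi)| with ht2def
  set c := Real.cos (α * Real.pi) with hcdef
  have h1c : 0 < 1 + c := by nlinarith [Real.neg_one_le_cos (α * Real.pi)]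
  set D := θ ^ 2 + 2 * θ * c * x ^ α + x ^ (2 * α) with hDdef
  have hDge1 : x ^ (2*α) * Real.sin (α * Real.pi) ^ 2 ≤ D := by
    rw [hDdef, hx2]; nlinarith [sq_nonneg (θ + c * x ^ α)]
  have hDge2 : 2 * θ * x ^ α * (1 + c) ≤ D := by
    rw [hDdef, hx2]; nlinarith [sq_nonneg (θ - x ^ α)]
  have hD : 0 < D := by
    refine lt_of_lt_of_le ?_ hDge2
    have := Real.rpow_pos_of_pos hx α
    positivity
  have hxβ : 0 ≤ x ^ (-β) := Real.rpow_nonneg hx.le _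
  refine (xi_abs_le α β θ x hα1 hα2 hθ hx).trans ?_
  rw [div_le_iff₀ (by positivity : (0:ℝ) < Real.pi * D), add_mul, add_mul]
  apply add_le_add
  · have heq : x ^ (2*α-β) * t1 =
        t1 / (Real.pi * Real.sin (α * Real.pi) ^ 2) * x ^ (-β) *
          (Real.pi * (x ^ (2*α) * Real.sin (α * Real.pi) ^ 2)) := by
      rw [show (2*α-β) = 2*α + -β by ring, Real.rpow_add hx]
      field_simp
    rw [heq]
    apply mul_le_mul_of_nonneg_left (mul_le_mul_of_nonneg_left hDge1 hπ.le)
    exact mul_nonneg (div_nonneg (abs_nonneg _) (by positivity)) hxβ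
  · have heq : θ * x ^ (α-β) * t2 =
        t2 / (2 * Real.pi * (1 + c)) * x ^ (-β) *
          (Real.pi * (2 * θ * x ^ α * (1 + c))) := by
      rw [show (α-β) = α + -β by ring, Real.rpow_add hx]
      field_simp
    rw [heq]
    apply mul_le_mul_of_nonneg_left (mul_le_mul_of_nonneg_left hDge2 hπ.le)
    exact mul_nonneg (div_nonneg (abs_nonneg _) (by positivity)) hxβ


/-- Let `α ∈ (1/2,1)`, `β ∈ (1/2, 1/2+α)`, `θ₁ > 0`, and let `δ*, η* ∈ ℝ`
satisfy `δ* < 1 + 2α − 2β·1_{α≠β}` and `η* < 2β − 1`.  Then for every `θ ≥ θ₁`: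
`∫_0^1 |ξ_{α,β}(x;θ)|² x^{−δ*} dx + ∫_1^∞ |ξ_{α,β}(x;θ)|² x^{η*} dx
  ≤ ((|sin(βπ)| θ₁^{−2} + |sin((α−β)π)| θ₁^{−1})/(π sin²(απ)))² / (1+2α−2β·1_{α≠β}−δ*)
   + (|sin(βπ)|/(π sin²(απ)) + |sin((α−β)π)|/(2π(1+cos(απ))))² / (2β−1−η*)`. -/
theorem xiFrac_weighted_square_integral_bound
    (α β θ₁ δs ηs : ℝ)
    (hα : α ∈ Set.Ioo (1 / 2 : ℝ) 1)
    (hβ : β ∈ Set.Ioo (1 / 2 : ℝ) (1 / 2 + α))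
    (hθ₁ : 0 < θ₁)
    (hδ : δs < 1 + 2 * α - 2 * β * (if α = β then 0 else 1))
    (hη : ηs < 2 * β - 1)
    (θ : ℝ) (hθ : θ₁ ≤ θ) :
    (∫ x in Set.Ioc (0 : ℝ) 1, |xiFrac α β x θ| ^ 2 * x ^ (-δs)) +
        (∫ x in Set.Ioi (1 : ℝ), |xiFrac α β x θ| ^ 2 * x ^ ηs) ≤
      ((|Real.sin (β * Real.pi)| / θ₁ ^ 2 + |Real.sin ((α - β) * Real.pi)| / θ₁) /
            (Real.pi * Real.sin (α * Real.pi) ^ 2)) ^ 2 /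
          (1 + 2 * α - 2 * β * (if α = β then 0 else 1) - δs)
        + (|Real.sin (β * Real.pi)| / (Real.pi * Real.sin (α * Real.pi) ^ 2)
              + |Real.sin ((α - β) * Real.pi)| /
                  (2 * Real.pi * (1 + Real.cos (α * Real.pi)))) ^ 2 /
            (2 * β - 1 - ηs) := by
  obtain ⟨hα1, hα2⟩ := hα
  obtain ⟨hβ1, hβ2⟩ := hβ
  have hθ0 : 0 < θ := lt_of_lt_of_le hθ₁ hθ
  set I : ℝ := (if α = β then 0 else 1) with hIdef
  set C₁ := ((|Real.sin (β * Real.pi)| / θ₁ ^ 2 + |Real.sin ((α - β) * Real.pi)| / θ₁) /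
      (Real.pi * Real.sin (α * Real.pi) ^ 2)) with hC₁def
  set C₂ := (|Real.sin (β * Real.pi)| / (Real.pi * Real.sin (α * Real.pi) ^ 2)
      + |Real.sin ((α - β) * Real.pi)| /
          (2 * Real.pi * (1 + Real.cos (α * Real.pi)))) with hC₂def
  set E : ℝ := α - β * I with hEdef
  have hEexp : 1 + 2 * α - 2 * β * I - δs = 2 * E - δs + 1 := by rw [hEdef]; ring
  have hr1 : -1 < 2 * E - δs := by
    have : 0 < 1 + 2 * α - 2 * β * I - δs := by linarith
    linarith [hEexp ▸ this]
  have hr2 : ηs - 2 * β < -1 := by linarith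
  -- first integral
  have hInt1 : IntegrableOn (fun x : ℝ => C₁ ^ 2 * x ^ (2 * E - δs)) (Ioc (0:ℝ) 1) := by
    have h := intervalIntegral.intervalIntegrable_rpow' (a := 0) (b := 1) hr1
    rw [intervalIntegrable_iff, uIoc_of_le zero_le_one] at h
    exact h.const_mul _
  have hb1 : (∫ x in Set.Ioc (0 : ℝ) 1, |xiFrac α β x θ| ^ 2 * x ^ (-δs)) ≤
      ∫ x in Set.Ioc (0 : ℝ) 1, C₁ ^ 2 * x ^ (2 * E - δs) := by
    apply integral_mono_of_nonneg
    · refine (ae_restrict_iff' measurableSet_Ioc).2 (ae_of_all _ fun x hx => ?_)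
      exact mul_nonneg (by positivity) (Real.rpow_nonneg hx.1.le _)
    · exact hInt1
    · refine (ae_restrict_iff' measurableSet_Ioc).2 (ae_of_all _ fun x hx => ?_)
      obtain ⟨hx0, hx1⟩ := hx
      have hb := xi_bound_small α β θ₁ θ x hα1 hα2 hθ₁ hθ hx0 hx1
      calc |xiFrac α β x θ| ^ 2 * x ^ (-δs) ≤ (C₁ * x ^ E) ^ 2 * x ^ (-δs) :=
            mul_le_mul_of_nonneg_right (pow_le_pow_left₀ (abs_nonneg _) hb 2)
              (Real.rpow_nonneg hx0.le _)
        _ = C₁ ^ 2 * x ^ (2 * E - δs) := by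
            rw [show 2 * E - δs = 2 * E + -δs by ring, Real.rpow_add hx0,
              sq_rpow_two x E hx0, mul_pow]
            ring
  have hval1 : (∫ x in Set.Ioc (0 : ℝ) 1, C₁ ^ 2 * x ^ (2 * E - δs)) =
      C₁ ^ 2 / (1 + 2 * α - 2 * β * I - δs) := by
    rw [← intervalIntegral.integral_of_le zero_le_one,
      intervalIntegral.integral_const_mul, integral_rpow (Or.inl hr1),
      Real.one_rpow, Real.zero_rpow (by linarith : 2 * E - δs + 1 ≠ 0), hEexp]
    ring
  -- second integral
  have hInt2 : IntegrableOn (fun x : ℝ => C₂ ^ 2 * x ^ (ηs - 2 * β)) (Ioi (1:ℝ)) :=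
    (integrableOn_Ioi_rpow_of_lt hr2 one_pos).const_mul _
  have hb2 : (∫ x in Set.Ioi (1 : ℝ), |xiFrac α β x θ| ^ 2 * x ^ ηs) ≤
      ∫ x in Set.Ioi (1 : ℝ), C₂ ^ 2 * x ^ (ηs - 2 * β) := by
    apply integral_mono_of_nonneg
    · refine (ae_restrict_iff' measurableSet_Ioi).2 (ae_of_all _ fun x hx => ?_)
      have hx0 : (0:ℝ) < x := lt_trans one_pos hx
      exact mul_nonneg (by positivity) (Real.rpow_nonneg hx0.le _)
    · exact hInt2
    · refine (ae_restrict_iff' measurableSet_Ioi).2 (ae_of_all _ fun x hx => ?_)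
      have hx0 : (0:ℝ) < x := lt_trans one_pos hx
      have hb := xi_bound_large α β θ x hα1 hα2 hθ0 hx0
      calc |xiFrac α β x θ| ^ 2 * x ^ ηs ≤ (C₂ * x ^ (-β)) ^ 2 * x ^ ηs :=
            mul_le_mul_of_nonneg_right (pow_le_pow_left₀ (abs_nonneg _) hb 2)
              (Real.rpow_nonneg hx0.le _)
        _ = C₂ ^ 2 * x ^ (ηs - 2 * β) := by
            rw [show ηs - 2 * β = 2 * (-β) + ηs by ring, Real.rpow_add hx0,
              sq_rpow_two x (-β) hx0, mul_pow]
            ring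
  have hval2 : (∫ x in Set.Ioi (1 : ℝ), C₂ ^ 2 * x ^ (ηs - 2 * β)) =
      C₂ ^ 2 / (2 * β - 1 - ηs) := by
    rw [MeasureTheory.integral_const_mul, integral_Ioi_rpow_of_lt hr2 one_pos, Real.one_rpow,
      show ηs - 2 * β + 1 = -(2 * β - 1 - ηs) by ring, div_neg, neg_div, neg_neg, mul_one_div]
  exact add_le_add (hb1.trans hval1.le) (hb2.trans hval2.le)
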